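/- Let f ∈ O_3 and let J be the family of segments I_1^k = [(0,1,1),(k,0,0)], I_2^k = [(1,0,1),(0,k,0)], I_3^k = [(1,1,0),(0,0,k)] for k ≥ 2. Then J ∩ Γ^1(f) contains at most one element, and if J ∩ Γ^1(f) is nonempty then either Γ^2(f) = ∅ or every 2-dimensional compact face of Γ(f) is exceptional (Γ^2(f) = E_f ≠ ∅). -/

import Mathlib

open Finset Filter Topology

/-- The `i`-th partial derivative of `f`. -/
noncomputable def pder {n : ℕ} (i : Fin n) (f : (Fin n → ℂ) → ℂ) : (Fin n → ℂ) → ℂ :=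
  fun z => fderiv ℂ f z (Pi.single i 1)

/-- The iterated partial derivative `∂^ν f` for a multi-index `ν`. -/
noncomputable def mder {n : ℕ} (ν : Fin n → ℕ) (f : (Fin n → ℂ) → ℂ) : (Fin n → ℂ) → ℂ :=
  ((List.finRange n).map fun i => (pder i)^[ν i]).foldr (fun g acc => g acc) f

/-- The support of the Taylor expansion of `f` at `0`. -/
def NSupp {n : ℕ} (f : (Fin n → ℂ) → ℂ) : Set (Fin n → ℕ) :=
  {ν | mder ν f 0 ≠ 0}

/-- The Taylor coefficient `a_ν` of `f` at `0`. -/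
noncomputable def coeffOf {n : ℕ} (f : (Fin n → ℂ) → ℂ) (ν : Fin n → ℕ) : ℂ :=
  mder ν f 0 / ((∏ i, (ν i).factorial : ℕ) : ℂ)

/-- The Newton diagram `Γ₊(f)`: the convex hull of `⋃_{ν ∈ supp f} (ν + ℝ₊ⁿ)`. -/
def NDiag {n : ℕ} (f : (Fin n → ℂ) → ℂ) : Set (Fin n → ℝ) :=
  convexHull ℝ {x | ∃ ν ∈ NSupp f, ∀ i, (ν i : ℝ) ≤ x i}

/-- `l(u, A) = inf {⟨u, v⟩ : v ∈ A}`. -/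
noncomputable def ell {n : ℕ} (u : Fin n → ℝ) (A : Set (Fin n → ℝ)) : ℝ :=
  sInf ((fun v => ∑ i, u i * v i) '' A)

/-- The face `Δ(u, A) = {v ∈ A : ⟨u, v⟩ = l(u, A)}`. -/
def faceOf {n : ℕ} (u : Fin n → ℝ) (A : Set (Fin n → ℝ)) : Set (Fin n → ℝ) :=
  {v | v ∈ A ∧ ∑ i, u i * v i = ell u A}

/-- `S` is a compact face of the Newton diagram of `f` (member of the Newton boundary). -/
def IsCompactFace {n : ℕ} (f : (Fin n → ℂ) → ℂ) (S : Set (Fin n → ℝ)) : Prop :=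
  ∃ u : Fin n → ℝ, (∀ i, 0 < u i) ∧ S = faceOf u (NDiag f)

/-- The dimension of a face, as the rank of the direction of its affine span. -/
noncomputable def faceDim {n : ℕ} (S : Set (Fin n → ℝ)) : ℕ :=
  Module.finrank ℝ (affineSpan ℝ S).direction

/-- `Γ^k(f)`: the `k`-dimensional compact faces of the Newton boundary of `f`. -/
def GammaK {n : ℕ} (f : (Fin n → ℂ) → ℂ) (k : ℕ) : Set (Set (Fin n → ℝ)) :=
  {S | IsCompactFace f S ∧ faceDim S = k}

/-- The quasihomogeneous polynomial `f_S = Σ_{ν ∈ S} a_ν z^ν`. -/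
noncomputable def facePoly {n : ℕ} (f : (Fin n → ℂ) → ℂ) (S : Set (Fin n → ℝ)) :
    (Fin n → ℂ) → ℂ :=
  fun z => ∑' ν : {ν : Fin n → ℕ // (fun i => (ν i : ℝ)) ∈ S}, coeffOf f ν.1 * ∏ i, z i ^ ν.1 i

/-- `f` is nondegenerate in the Kouchnirenko sense. -/
def Nondeg {n : ℕ} (f : (Fin n → ℂ) → ℂ) : Prop :=
  ∀ S, IsCompactFace f S →
    ¬∃ z : Fin n → ℂ, (∀ i, z i ≠ 0) ∧ ∀ i, pder i (facePoly f S) z = 0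

/-- `f` is a singularity: a nonzero holomorphic germ with `f 0 = 0`, `∇f 0 = 0`. -/
def IsSing {n : ℕ} (f : (Fin n → ℂ) → ℂ) : Prop :=
  AnalyticAt ℂ f 0 ∧ (¬∀ᶠ z in 𝓝 0, f z = 0) ∧ f 0 = 0 ∧ ∀ i, pder i f 0 = 0

/-- `f` is an isolated singularity: `∇f` has an isolated zero at `0`. -/
def IsIsolSing {n : ℕ} (f : (Fin n → ℂ) → ℂ) : Prop :=
  IsSing f ∧ ∃ r > (0 : ℝ), ∀ z : Fin n → ℂ, ‖z‖ < r → z ≠ 0 → ∃ i, pder i f z ≠ 0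

/-- Euclidean distance of a point of `ℝ³` to the `i`-th coordinate axis. -/
noncomputable def distAxis (i : Fin 3) (W : Fin 3 → ℝ) : ℝ :=
  Real.sqrt (∑ j ∈ Finset.univ.erase i, (W j) ^ 2)

/-- The vertices (0-dimensional compact faces of the Newton boundary of `f`) lying in `S`. -/
def vtxOf (f : (Fin 3 → ℂ) → ℂ) (S : Set (Fin 3 → ℝ)) : Set (Fin 3 → ℝ) :=
  {A | IsCompactFace f {A} ∧ A ∈ S}

/-- `S` is an exceptional face with respect to the axis `OX_i`: one of its vertices `W` is
at distance `1` from `OX_i` and the remaining vertices constitute a `1`-dimensional face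
lying in a coordinate plane containing `OX_i`. -/
def ExcWrt (f : (Fin 3 → ℂ) → ℂ) (i : Fin 3) (S : Set (Fin 3 → ℝ)) : Prop :=
  ∃ W ∈ vtxOf f S, distAxis i W = 1 ∧
    ∃ T ∈ GammaK f 1, (∃ j, j ≠ i ∧ T ⊆ {x : Fin 3 → ℝ | x j = 0}) ∧
      vtxOf f T = vtxOf f S \ {W}

/-- The set `E_f` of exceptional 2-dimensional faces of `f`. -/
def Ef (f : (Fin 3 → ℂ) → ℂ) : Set (Set (Fin 3 → ℝ)) :=
  {S | S ∈ GammaK f 2 ∧ ∃ i, ExcWrt f i S}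

/-- `I` is the segment `I_j^m` of the family `𝒥` for the given `m`. -/
def segJ (m : ℕ) (I : Set (Fin 3 → ℝ)) : Prop :=
  I = segment ℝ ![0, 1, 1] ![(m : ℝ), 0, 0] ∨
  I = segment ℝ ![1, 0, 1] ![0, (m : ℝ), 0] ∨
  I = segment ℝ ![1, 1, 0] ![0, 0, (m : ℝ)]

/-- `I` belongs to the family `𝒥 = {I_j^k : j = 1,2,3, k ≥ 2}`. -/
def InJ (I : Set (Fin 3 → ℝ)) : Prop := ∃ m : ℕ, 2 ≤ m ∧ segJ m I

/-! ### auxiliary development -/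


/-- The support of `f` as a set of real points. -/
def SuppR (f : (Fin 3 → ℂ) → ℂ) : Set (Fin 3 → ℝ) :=
  {x | ∃ ν ∈ NSupp f, x = fun i => (ν i : ℝ)}

lemma suppR_nonneg {f} {x : Fin 3 → ℝ} (hx : x ∈ SuppR f) (j : Fin 3) : 0 ≤ x j := by
  obtain ⟨ν, -, rfl⟩ := hx; positivity

lemma suppR_coord {f} {x : Fin 3 → ℝ} (hx : x ∈ SuppR f) (j : Fin 3) :
    x j = 0 ∨ 1 ≤ x j := by
  obtain ⟨ν, -, rfl⟩ := hx
  rcases Nat.eq_zero_or_pos (ν j) with h | h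
  · left; simp [h]
  · right; simp only []; exact_mod_cast h

lemma suppR_mem_ndiag {f} {x : Fin 3 → ℝ} (hx : x ∈ SuppR f) : x ∈ NDiag f := by
  obtain ⟨ν, hν, rfl⟩ := hx
  exact subset_convexHull ℝ _ ⟨ν, hν, fun i => le_refl _⟩

lemma ndiag_nonneg {f} {x : Fin 3 → ℝ} (hx : x ∈ NDiag f) (i : Fin 3) : 0 ≤ x i := by
  have hconv : Convex ℝ {x : Fin 3 → ℝ | ∀ i, 0 ≤ x i} := by
    intro a ha b hb s t hs ht _ i
    have h1 := ha i; have h2 := hb i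
    have : (s • a + t • b) i = s * a i + t * b i := rfl
    rw [this]
    exact add_nonneg (mul_nonneg hs h1) (mul_nonneg ht h2)
  have hsub : {x : Fin 3 → ℝ | ∃ ν ∈ NSupp f, ∀ i, (ν i : ℝ) ≤ x i} ⊆ {x | ∀ i, 0 ≤ x i} := by
    rintro y ⟨ν, -, hy⟩ i
    exact le_trans (by positivity) (hy i)
  exact convexHull_min hsub hconv hx i

lemma ell_le {f} {v : Fin 3 → ℝ} (hv : ∀ i, 0 ≤ v i) {x : Fin 3 → ℝ} (hx : x ∈ NDiag f) :
    ell v (NDiag f) ≤ ∑ i, v i * x i := by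
  apply csInf_le
  · refine ⟨0, ?_⟩
    rintro r ⟨y, hy, rfl⟩
    exact Finset.sum_nonneg fun i _ => mul_nonneg (hv i) (ndiag_nonneg hy i)
  · exact ⟨x, hx, rfl⟩

lemma finite_low {v : Fin 3 → ℝ} (hv : ∀ i, 0 < v i) (C : ℝ) :
    {ν : Fin 3 → ℕ | ∑ i, v i * (ν i : ℝ) ≤ C}.Finite := by
  have hsub : {ν : Fin 3 → ℕ | ∑ i, v i * (ν i : ℝ) ≤ C} ⊆
      Set.pi Set.univ (fun i => Set.Iic (⌊C / v i⌋₊)) := by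
    intro ν hν i _
    have h1 : v i * (ν i : ℝ) ≤ C := by
      have := Finset.single_le_sum (f := fun j => v j * (ν j : ℝ))
        (fun j _ => mul_nonneg (hv j).le (by positivity)) (Finset.mem_univ i)
      exact this.trans hν
    have h2 : (ν i : ℝ) ≤ C / v i := (le_div_iff₀ (hv i)).2 (by linarith [h1])
    exact Nat.le_floor h2
  exact (Set.Finite.pi (fun i => Set.finite_Iic _)).subset hsub

lemma exists_min {f} {v : Fin 3 → ℝ} (hv : ∀ i, 0 < v i) (hne : (NSupp f).Nonempty) :
    ∃ x₀ ∈ SuppR f, (∀ x ∈ SuppR f, ∑ i, v i * x₀ i ≤ ∑ i, v i * x i) ∧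
      ell v (NDiag f) = ∑ i, v i * x₀ i := by
  obtain ⟨μ, hμ⟩ := hne
  set C := ∑ i, v i * (μ i : ℝ) with hC
  have hfin : (NSupp f ∩ {ν | ∑ i, v i * (ν i : ℝ) ≤ C}).Finite :=
    (finite_low hv C).subset Set.inter_subset_right
  obtain ⟨ν₀, hν₀mem, hν₀min⟩ := Set.exists_min_image _ (fun ν => ∑ i, v i * (ν i : ℝ)) hfin
    ⟨μ, hμ, hC.ge⟩
  refine ⟨fun i => (ν₀ i : ℝ), ⟨ν₀, hν₀mem.1, rfl⟩, ?_, ?_⟩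
  · rintro x ⟨ν, hν, rfl⟩
    by_cases h : ∑ i, v i * (ν i : ℝ) ≤ C
    · exact hν₀min ν ⟨hν, h⟩
    · exact le_trans (hν₀min μ ⟨hμ, hC.ge⟩) (by push_neg at h; exact h.le)
  · have hmin : ∀ x ∈ SuppR f, ∑ i, v i * (ν₀ i : ℝ) ≤ ∑ i, v i * x i := by
      rintro x ⟨ν, hν, rfl⟩
      by_cases h : ∑ i, v i * (ν i : ℝ) ≤ C
      · exact hν₀min ν ⟨hν, h⟩
      · exact le_trans (hν₀min μ ⟨hμ, hC.ge⟩) (by push_neg at h; exact h.le)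
    refine le_antisymm (ell_le (fun i => (hv i).le) (suppR_mem_ndiag ⟨ν₀, hν₀mem.1, rfl⟩)) ?_
    apply le_csInf
    · exact ⟨_, ⟨_, suppR_mem_ndiag ⟨μ, hμ, rfl⟩, rfl⟩⟩
    rintro r ⟨y, hy, rfl⟩
    -- lower bound on hull via convexity of half-space
    have hconv : Convex ℝ {x : Fin 3 → ℝ | ∑ i, v i * (ν₀ i : ℝ) ≤ ∑ i, v i * x i} := by
      intro a ha b hb s t hs ht hst
      simp only [Set.mem_setOf_eq] at ha hb ⊢
      have he : ∑ i, v i * (s • a + t • b) i = s * (∑ i, v i * a i) + t * (∑ i, v i * b i) := by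
        rw [Finset.mul_sum, Finset.mul_sum, ← Finset.sum_add_distrib]
        exact Finset.sum_congr rfl fun i _ => by simp [Pi.add_apply]; ring
      rw [he]
      have key : (s + t) * (∑ i, v i * (ν₀ i : ℝ)) = ∑ i, v i * (ν₀ i : ℝ) := by
        rw [hst, one_mul]
      nlinarith [mul_le_mul_of_nonneg_left ha hs, mul_le_mul_of_nonneg_left hb ht, key]
    have hsub : {x : Fin 3 → ℝ | ∃ ν ∈ NSupp f, ∀ i, (ν i : ℝ) ≤ x i} ⊆
        {x | ∑ i, v i * (ν₀ i : ℝ) ≤ ∑ i, v i * x i} := by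
      rintro y ⟨ν, hν, hy⟩
      refine le_trans (hmin _ ⟨ν, hν, rfl⟩) ?_
      exact Finset.sum_le_sum fun i _ => mul_le_mul_of_nonneg_left (hy i) (hv i).le
    exact convexHull_min hsub hconv hy

/-! ### the face structure lemma -/

/-- dot product as a linear map -/
noncomputable def dotL (v : Fin 3 → ℝ) : (Fin 3 → ℝ) →ₗ[ℝ] ℝ where
  toFun x := ∑ i, v i * x i
  map_add' x y := by
    simp only [Pi.add_apply, mul_add]
    rw [Finset.sum_add_distrib]
  map_smul' s x := by
    simp only [Pi.smul_apply, smul_eq_mul, RingHom.id_apply, Finset.mul_sum]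
    exact Finset.sum_congr rfl fun i _ => by ring

lemma dotL_apply (v x : Fin 3 → ℝ) : dotL v x = ∑ i, v i * x i := rfl

/-- the argmin set of `v` over the support -/
def MinS (f : (Fin 3 → ℂ) → ℂ) (v : Fin 3 → ℝ) : Set (Fin 3 → ℝ) :=
  {x | x ∈ SuppR f ∧ ∑ i, v i * x i = ell v (NDiag f)}

lemma face_eq_hull {f} {v : Fin 3 → ℝ} (hv : ∀ i, 0 < v i) (hne : (NSupp f).Nonempty) :
    faceOf v (NDiag f) = convexHull ℝ (MinS f v) := by
  obtain ⟨x₀, hx₀supp, hx₀min, hx₀ell⟩ := exists_min hv hne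
  apply Set.Subset.antisymm
  · rintro x ⟨hxN, hxe⟩
    have hxN' := hxN
    rw [NDiag, _root_.convexHull_eq] at hxN'
    obtain ⟨ι, t, w, z, hw0, hw1, hz, hx⟩ := hxN'
    -- each z i with w i ≠ 0 is in MinS f v
    have hzN : ∀ i ∈ t, z i ∈ NDiag f := fun i hi => subset_convexHull ℝ _ (hz i hi)
    have hge : ∀ i ∈ t, ell v (NDiag f) ≤ dotL v (z i) := fun i hi =>
      ell_le (fun j => (hv j).le) (hzN i hi)
    have hxsum : x = ∑ i ∈ t, w i • z i := by rw [← hx, Finset.centerMass_eq_of_sum_1 _ _ hw1]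
    have hdx : ∑ i ∈ t, w i * dotL v (z i) = ell v (NDiag f) := by
      have : dotL v x = ∑ i ∈ t, w i * dotL v (z i) := by
        rw [hxsum, map_sum]
        exact Finset.sum_congr rfl fun i _ => by rw [map_smul, smul_eq_mul]
      rw [← this, dotL_apply, hxe]
    have hkey : ∀ i ∈ t, w i * (dotL v (z i) - ell v (NDiag f)) = 0 := by
      have hsum0 : ∑ i ∈ t, w i * (dotL v (z i) - ell v (NDiag f)) = 0 := by
        simp only [mul_sub, Finset.sum_sub_distrib, hdx, ← Finset.sum_mul, hw1, one_mul, sub_self]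
      intro i hi
      have := (Finset.sum_eq_zero_iff_of_nonneg (fun i hi =>
        mul_nonneg (hw0 i hi) (sub_nonneg.2 (hge i hi)))).1 hsum0 i hi
      exact this
    have hmem : ∀ i ∈ t, w i ≠ 0 → z i ∈ MinS f v := by
      intro i hi hwi
      have hdot : dotL v (z i) = ell v (NDiag f) := by
        have := hkey i hi
        rcases mul_eq_zero.1 this with h | h
        · exact absurd h hwi
        · linarith [sub_eq_zero.1 h]
      obtain ⟨ν, hν, hzi⟩ := hz i hi
      have hν_le : ell v (NDiag f) ≤ ∑ j, v j * (ν j : ℝ) := hx₀ell ▸ hx₀min _ ⟨ν, hν, rfl⟩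
      have hdot_ge : ∑ j, v j * (ν j : ℝ) ≤ dotL v (z i) := by
        rw [dotL_apply]
        exact Finset.sum_le_sum fun j _ => mul_le_mul_of_nonneg_left (hzi j) (hv j).le
      have heqν : ∑ j, v j * (ν j : ℝ) = ell v (NDiag f) := le_antisymm (hdot ▸ hdot_ge) hν_le
      -- z i = cast ν
      have hzeq : z i = fun j => (ν j : ℝ) := by
        have hsum0 : ∑ j, v j * (z i j - (ν j : ℝ)) = 0 := by
          have : ∑ j, v j * (z i j - (ν j : ℝ)) =
              dotL v (z i) - ∑ j, v j * (ν j : ℝ) := by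
            rw [dotL_apply, ← Finset.sum_sub_distrib]
            exact Finset.sum_congr rfl fun j _ => by ring
          rw [this, hdot, heqν, sub_self]
        funext j
        have := (Finset.sum_eq_zero_iff_of_nonneg (fun j _ =>
          mul_nonneg (hv j).le (sub_nonneg.2 (hzi j)))).1 hsum0 j (Finset.mem_univ j)
        have hvj := (hv j).ne'
        have : z i j - (ν j : ℝ) = 0 := by
          rcases mul_eq_zero.1 this with h | h
          · exact absurd h hvj
          · exact h
        linarith
      exact ⟨⟨ν, hν, hzeq⟩, by rw [← dotL_apply, hdot]⟩
    -- restrict to nonzero weights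
    rw [← hx, ← Finset.centerMass_filter_ne_zero]
    apply Finset.centerMass_mem_convexHull
    · exact fun i hi => hw0 i (Finset.mem_filter.1 hi).1
    · rw [Finset.sum_filter_ne_zero, hw1]; norm_num
    · intro i hi
      rw [Finset.mem_filter] at hi
      exact hmem i hi.1 hi.2
  · apply convexHull_min
    · rintro x ⟨hxsupp, hxe⟩
      exact ⟨suppR_mem_ndiag hxsupp, hxe⟩
    · have h1 : Convex ℝ (NDiag f) := convex_convexHull ℝ _
      have h2 : Convex ℝ {x : Fin 3 → ℝ | ∑ i, v i * x i = ell v (NDiag f)} := by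
        intro a ha b hb s t hs ht hst
        simp only [Set.mem_setOf_eq] at ha hb ⊢
        have he : ∑ i, v i * (s • a + t • b) i = s * (∑ i, v i * a i) + t * (∑ i, v i * b i) := by
          rw [Finset.mul_sum, Finset.mul_sum, ← Finset.sum_add_distrib]
          exact Finset.sum_congr rfl fun i _ => by simp [Pi.add_apply]; ring
        rw [he, ha, hb, ← add_mul, hst, one_mul]
      exact h1.inter h2

/-! ### pattern points and index helpers -/

def ptA (i₀ : Fin 3) : Fin 3 → ℝ := fun j => if j = i₀ then 0 else 1
def ptB (i₀ : Fin 3) (k : ℕ) : Fin 3 → ℝ := fun j => if j = i₀ then (k : ℝ) else 0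

lemma univ3 {i₀ i₁ i₂ : Fin 3} (h01 : i₀ ≠ i₁) (h02 : i₀ ≠ i₂) (h12 : i₁ ≠ i₂) :
    ({i₀, i₁, i₂} : Finset (Fin 3)) = Finset.univ := by
  apply Finset.eq_univ_of_card
  rw [Finset.card_insert_of_notMem (by simp [h01, h02]),
    Finset.card_insert_of_notMem (by simp [h12]), Finset.card_singleton]
  rfl

lemma sum3 {i₀ i₁ i₂ : Fin 3} (h01 : i₀ ≠ i₁) (h02 : i₀ ≠ i₂) (h12 : i₁ ≠ i₂)
    (g : Fin 3 → ℝ) : ∑ j, g j = g i₀ + g i₁ + g i₂ := by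
  rw [← univ3 h01 h02 h12]
  rw [Finset.sum_insert (by simp [h01, h02]), Finset.sum_insert (by simp [h12]),
    Finset.sum_singleton]
  ring

lemma eq3 {i₀ i₁ i₂ : Fin 3} (h01 : i₀ ≠ i₁) (h02 : i₀ ≠ i₂) (h12 : i₁ ≠ i₂)
    {x y : Fin 3 → ℝ} (e0 : x i₀ = y i₀) (e1 : x i₁ = y i₁) (e2 : x i₂ = y i₂) : x = y := by
  funext j
  have hj : j ∈ ({i₀, i₁, i₂} : Finset (Fin 3)) := by rw [univ3 h01 h02 h12]; exact Finset.mem_univ j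
  simp only [Finset.mem_insert, Finset.mem_singleton] at hj
  rcases hj with rfl | rfl | rfl <;> assumption

lemma dot_ptA {i₀ : Fin 3} (u : Fin 3 → ℝ) :
    ∑ j, u j * ptA i₀ j = (∑ j, u j) - u i₀ := by
  have : ∀ j, u j * ptA i₀ j = u j - (if j = i₀ then u j else 0) := by
    intro j; by_cases h : j = i₀ <;> simp [ptA, h]
  rw [Finset.sum_congr rfl fun j _ => this j, Finset.sum_sub_distrib,
    Finset.sum_ite_eq' Finset.univ i₀ u]
  simp

lemma dot_ptB {i₀ : Fin 3} (u : Fin 3 → ℝ) (k : ℕ) :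
    ∑ j, u j * ptB i₀ k j = (k : ℝ) * u i₀ := by
  have : ∀ j, u j * ptB i₀ k j = if j = i₀ then (k : ℝ) * u i₀ else 0 := by
    intro j; by_cases h : j = i₀ <;> simp [ptB, h] <;> ring
  rw [Finset.sum_congr rfl fun j _ => this j, Finset.sum_ite_eq' Finset.univ i₀]
  simp

lemma ptA_self {i₀ : Fin 3} : ptA i₀ i₀ = 0 := by simp [ptA]
lemma ptA_ne {i₀ j : Fin 3} (h : j ≠ i₀) : ptA i₀ j = 1 := by simp [ptA, h]
lemma ptB_self {i₀ : Fin 3} {k : ℕ} : ptB i₀ k i₀ = (k : ℝ) := by simp [ptB]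
lemma ptB_ne {i₀ j : Fin 3} {k : ℕ} (h : j ≠ i₀) : ptB i₀ k j = 0 := by simp [ptB, h]

/-- the master infeasibility lemma -/
lemma master {u0 u1 u2 w0 w1 w2 c k p q a b : ℝ}
    (hu0 : 0 < u0) (hw0 : 0 < w0) (hw1 : 0 < w1) (hw2 : 0 < w2)
    (hp : 1 ≤ p) (hq : 1 ≤ q) (ha : 0 ≤ a) (hb : 0 ≤ b)
    (h1 : u1 + u2 = k * u0)
    (h2 : k * u0 < a * u0 + p * u2)
    (h3 : k * u0 < b * u0 + q * u1)
    (h4 : a * w0 + p * w2 = c)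
    (h5 : b * w0 + q * w1 = c)
    (h6 : c ≤ w1 + w2)
    (h7 : c ≤ k * w0) : False := by
  have hp0 : 0 < p := by linarith
  have hq0 : 0 < q := by linarith
  have hc : 0 < c := by nlinarith
  have hqw1 : q * w1 ≤ c := by nlinarith
  have hpw2 : p * w2 ≤ c := by nlinarith
  have hm : 0 ≤ p + q - p * q := by nlinarith
  have hi : (p + q - p * q) * k < q * a + p * b := by nlinarith
  have he : (q * a + p * b) * w0 + p * q * (w1 + w2) = (p + q) * c := by
    linear_combination q * h4 + p * h5
  have hii : (q * a + p * b) * w0 ≤ (p + q - p * q) * c := by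
    nlinarith [mul_le_mul_of_nonneg_left h6 (by positivity : (0:ℝ) ≤ p * q)]
  nlinarith [mul_le_mul_of_nonneg_left h7 hm, mul_lt_mul_of_pos_right hi hw0]

lemma ell_le_suppR {f} {v : Fin 3 → ℝ} (hv : ∀ i, 0 < v i) (hne : (NSupp f).Nonempty)
    {x : Fin 3 → ℝ} (hx : x ∈ SuppR f) : ell v (NDiag f) ≤ ∑ i, v i * x i := by
  obtain ⟨x₀, -, hmin, hell⟩ := exists_min hv hne
  exact hell ▸ hmin x hx

lemma supp_nonempty_of_face {f} {u : Fin 3 → ℝ} {S : Set (Fin 3 → ℝ)}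
    (hface : S = faceOf u (NDiag f)) (hS : S.Nonempty) : (NSupp f).Nonempty := by
  obtain ⟨x, hx⟩ := hS
  rw [hface] at hx
  have hxN : x ∈ NDiag f := hx.1
  by_contra h
  rw [Set.not_nonempty_iff_eq_empty] at h
  have : NDiag f = ∅ := by
    rw [NDiag]
    convert convexHull_empty
    simp [h]
  rw [this] at hxN
  exact hxN

/-- Properties extracted from a `J`-segment being a face. -/
lemma seg_face_props {f} {u : Fin 3 → ℝ} (hu : ∀ i, 0 < u i) {i₀ i₁ i₂ : Fin 3}
    (h01 : i₀ ≠ i₁) (h02 : i₀ ≠ i₂) (h12 : i₁ ≠ i₂) {k : ℕ} (hk : 2 ≤ k)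
    (hface : segment ℝ (ptA i₀) (ptB i₀ k) = faceOf u (NDiag f)) :
    (NSupp f).Nonempty ∧ ptA i₀ ∈ SuppR f ∧ ptB i₀ k ∈ SuppR f ∧
    ell u (NDiag f) = ∑ i, u i * ptA i₀ i ∧
    ∑ i, u i * ptB i₀ k i = ell u (NDiag f) ∧
    (∀ x ∈ SuppR f, x ≠ ptA i₀ → x ≠ ptB i₀ k → ell u (NDiag f) < ∑ i, u i * x i) := by
  have hAB : ptA i₀ ≠ ptB i₀ k := by
    intro h
    have := congrFun h i₁
    rw [ptA_ne h01.symm, ptB_ne h01.symm] at this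
    norm_num at this
  have hne : (NSupp f).Nonempty :=
    supp_nonempty_of_face (S := segment ℝ (ptA i₀) (ptB i₀ k)) hface
      ⟨ptA i₀, left_mem_segment ℝ _ _⟩
  have hhull : segment ℝ (ptA i₀) (ptB i₀ k) = convexHull ℝ (MinS f u) := by
    rw [hface, face_eq_hull hu hne]
  -- every element of MinS is ptA or ptB
  have hMsub : MinS f u ⊆ {ptA i₀, ptB i₀ k} := by
    intro x hx
    have hxseg : x ∈ segment ℝ (ptA i₀) (ptB i₀ k) := by
      rw [hhull]; exact subset_convexHull ℝ _ hx
    obtain ⟨s, t, hs, ht, hst, hxe⟩ := hxseg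
    have hx1 : x i₁ = s := by
      have := congrFun hxe i₁
      rw [← this]
      simp [ptA_ne h01.symm, ptB_ne h01.symm]
    have hcoord := suppR_coord hx.1 i₁
    rcases hcoord with h0 | h1
    · -- s = 0, x = ptB
      right
      have hs0 : s = 0 := by rw [← hx1]; exact h0
      have ht1 : t = 1 := by linarith
      rw [← hxe, hs0, ht1]
      simp
    · -- s = 1, x = ptA
      left
      have hs1 : s = 1 := by
        have hsle : s ≤ 1 := by linarith
        have : 1 ≤ s := by rw [hx1] at h1; exact h1
        linarith
      have ht0 : t = 0 := by linarith
      rw [← hxe, hs1, ht0]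
      simp
  have hAmem : ptA i₀ ∈ MinS f u := by
    by_contra h
    have : MinS f u ⊆ {ptB i₀ k} := by
      intro x hx
      rcases hMsub hx with h' | h'
      · exact absurd (h' ▸ hx) h
      · exact h'
    have h2 : segment ℝ (ptA i₀) (ptB i₀ k) ⊆ {ptB i₀ k} := by
      rw [hhull]
      refine le_trans (convexHull_mono this) ?_
      rw [convexHull_singleton]
    exact hAB (h2 (left_mem_segment ℝ _ _))
  have hBmem : ptB i₀ k ∈ MinS f u := by
    by_contra h
    have : MinS f u ⊆ {ptA i₀} := by
      intro x hx
      rcases hMsub hx with h' | h'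
      · exact h'
      · exact absurd (h' ▸ hx) h
    have h2 : segment ℝ (ptA i₀) (ptB i₀ k) ⊆ {ptA i₀} := by
      rw [hhull]
      refine le_trans (convexHull_mono this) ?_
      rw [convexHull_singleton]
    exact hAB (h2 (right_mem_segment ℝ _ _)).symm
  refine ⟨hne, hAmem.1, hBmem.1, hAmem.2.symm, hBmem.2, ?_⟩
  intro x hx hxA hxB
  have hge := ell_le_suppR hu hne hx
  rcases lt_or_eq_of_le hge with h | h
  · exact h
  · exfalso
    have : x ∈ MinS f u := ⟨hx, h.symm⟩
    rcases hMsub this with h' | h'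
    · exact hxA h'
    · exact hxB h'

/-! ### dimension lemmas -/

lemma dot_single (w : Fin 3 → ℝ) (j : Fin 3) (a : ℝ) :
    ∑ l, w l * (Pi.single j a : Fin 3 → ℝ) l = w j * a := by
  have : ∀ l, w l * (Pi.single j a : Fin 3 → ℝ) l = if l = j then w l * a else 0 := by
    intro l; by_cases h : l = j <;> simp [Pi.single_apply, h]
  rw [Finset.sum_congr rfl fun l _ => this l, Finset.sum_ite_eq' Finset.univ j]
  simp

lemma dim_le_one_plane {i j : Fin 3} (hij : i ≠ j) {w : Fin 3 → ℝ} (hwi : w i ≠ 0) {c : ℝ}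
    {T : Set (Fin 3 → ℝ)} (hT : ∀ x ∈ T, x j = 0 ∧ ∑ l, w l * x l = c) :
    Module.finrank ℝ (affineSpan ℝ T).direction ≤ 1 := by
  set φ : (Fin 3 → ℝ) →ₗ[ℝ] ℝ × ℝ := (LinearMap.proj j).prod (dotL w) with hφ
  have hsurj : Function.Surjective φ := by
    rintro ⟨s, t⟩
    refine ⟨s • (Pi.single j 1 : Fin 3 → ℝ) + ((t - s * w j) / w i) • (Pi.single i 1 : Fin 3 → ℝ), ?_⟩
    have h1 : (s • (Pi.single j 1 : Fin 3 → ℝ) + ((t - s * w j) / w i) • (Pi.single i 1 : Fin 3 → ℝ)) j = s := by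
      simp [Pi.single_apply, hij.symm]
    have h2 : dotL w (s • (Pi.single j 1 : Fin 3 → ℝ) + ((t - s * w j) / w i) • (Pi.single i 1 : Fin 3 → ℝ)) = t := by
      rw [map_add, map_smul, map_smul]
      simp only [smul_eq_mul, dotL_apply]
      rw [dot_single, dot_single]
      field_simp
      ring
    have : φ (s • (Pi.single j 1 : Fin 3 → ℝ) + ((t - s * w j) / w i) • (Pi.single i 1 : Fin 3 → ℝ)) =
        ((s • (Pi.single j 1 : Fin 3 → ℝ) + ((t - s * w j) / w i) • (Pi.single i 1 : Fin 3 → ℝ)) j,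
          dotL w (s • (Pi.single j 1 : Fin 3 → ℝ) + ((t - s * w j) / w i) • (Pi.single i 1 : Fin 3 → ℝ))) := rfl
    rw [this, h1, h2]
  have hker : Module.finrank ℝ (LinearMap.ker φ) = 1 := by
    have := LinearMap.finrank_range_add_finrank_ker φ
    rw [LinearMap.range_eq_top.2 hsurj] at this
    rw [finrank_top] at this
    have h2 : Module.finrank ℝ (ℝ × ℝ) = 2 := by
      simp [Module.finrank_prod]
    have h3 : Module.finrank ℝ (Fin 3 → ℝ) = 3 := by
      simp [Module.finrank_pi]
    omega
  have hle : (affineSpan ℝ T).direction ≤ LinearMap.ker φ := by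
    rw [direction_affineSpan]
    apply Submodule.span_le.2
    rintro v ⟨x, hx, y, hy, rfl⟩
    obtain ⟨hx1, hx2⟩ := hT x hx
    obtain ⟨hy1, hy2⟩ := hT y hy
    have hz : φ x - φ y = 0 := by
      have hφx : φ x = (x j, ∑ l, w l * x l) := rfl
      have hφy : φ y = (y j, ∑ l, w l * y l) := rfl
      rw [hφx, hφy, hx1, hy1, hx2, hy2]
      simp
    simpa [LinearMap.mem_ker, vsub_eq_sub, map_sub] using hz
  calc Module.finrank ℝ (affineSpan ℝ T).direction ≤ Module.finrank ℝ (LinearMap.ker φ) :=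
        Submodule.finrank_mono hle
    _ = 1 := hker

lemma dim_le_one_pair {a b : Fin 3 → ℝ} {T : Set (Fin 3 → ℝ)}
    (hT : T ⊆ convexHull ℝ {a, b}) :
    Module.finrank ℝ (affineSpan ℝ T).direction ≤ 1 := by
  have h1 : affineSpan ℝ T ≤ affineSpan ℝ ({a, b} : Set (Fin 3 → ℝ)) := by
    refine le_trans (affineSpan_mono ℝ hT) ?_
    rw [affineSpan_convexHull]
  have h2 := AffineSubspace.direction_le h1
  refine le_trans (Submodule.finrank_mono h2) ?_
  rw [direction_affineSpan, vectorSpan_pair]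
  rcases eq_or_ne (a -ᵥ b) 0 with h | h
  · rw [h, Submodule.span_zero_singleton]
    simp
  · rw [finrank_span_singleton h]

lemma dim_ge_one {x y : Fin 3 → ℝ} {T : Set (Fin 3 → ℝ)} (hx : x ∈ T) (hy : y ∈ T)
    (hxy : x ≠ y) : 1 ≤ Module.finrank ℝ (affineSpan ℝ T).direction := by
  have hmem : x -ᵥ y ∈ (affineSpan ℝ T).direction :=
    AffineSubspace.vsub_mem_direction (subset_affineSpan ℝ T hx) (subset_affineSpan ℝ T hy)
  have hne : x -ᵥ y ≠ 0 := by
    rw [vsub_eq_sub, sub_ne_zero]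
    exact hxy
  have hne' : (⟨x -ᵥ y, hmem⟩ : (affineSpan ℝ T).direction) ≠ 0 :=
    fun hc => hne (congrArg Subtype.val hc)
  have : Nontrivial (affineSpan ℝ T).direction := ⟨_, 0, hne'⟩
  exact Module.finrank_pos_iff.mpr this

/-! ### perturbation lemmas -/

def indC (i₀ : Fin 3) : Fin 3 → ℝ := fun j => if j = i₀ then 1 else 0

lemma dot_add_ind (v : Fin 3 → ℝ) (i : Fin 3) (x : Fin 3 → ℝ) :
    ∑ j, (v j + indC i j) * x j = (∑ j, v j * x j) + x i := by
  have : ∀ j, (v j + indC i j) * x j = v j * x j + (if j = i then x j else 0) := by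
    intro j; by_cases h : j = i <;> simp [indC, h] <;> ring
  rw [Finset.sum_congr rfl fun j _ => this j, Finset.sum_add_distrib,
    Finset.sum_ite_eq' Finset.univ i x]
  simp

lemma pert_face {f} {v : Fin 3 → ℝ} (hv : ∀ i, 0 < v i) (hne : (NSupp f).Nonempty)
    (i : Fin 3) (hwit : ∃ x ∈ MinS f v, x i = 0) :
    ell (fun j => v j + indC i j) (NDiag f) = ell v (NDiag f) ∧
      MinS f (fun j => v j + indC i j) = {x ∈ MinS f v | x i = 0} := by
  obtain ⟨xw, hxwM, hxwi⟩ := hwit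
  have hv' : ∀ j, 0 < v j + indC i j := by
    intro j
    by_cases h : j = i
    · subst h; simp [indC]; linarith [hv j]
    · simp [indC, h]; exact hv j
  have hdotw : ∑ j, (v j + indC i j) * xw j = ell v (NDiag f) := by
    rw [dot_add_ind, hxwi, add_zero, hxwM.2]
  have hge : ∀ x ∈ SuppR f, ell v (NDiag f) ≤ ∑ j, (v j + indC i j) * x j := by
    intro x hx
    rw [dot_add_ind]
    have h1 := ell_le_suppR hv hne hx
    have h2 := suppR_nonneg hx i
    linarith
  have hell : ell (fun j => v j + indC i j) (NDiag f) = ell v (NDiag f) := by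
    obtain ⟨x₀, hx₀supp, hx₀min, hx₀ell⟩ := exists_min hv' hne
    refine le_antisymm ?_ ?_
    · rw [← hdotw]
      exact ell_le_suppR hv' hne hxwM.1
    · rw [hx₀ell]
      exact hge x₀ hx₀supp
  refine ⟨hell, ?_⟩
  ext x
  constructor
  · rintro ⟨hxsupp, hxe⟩
    rw [hell, dot_add_ind] at hxe
    have h1 := ell_le_suppR hv hne hxsupp
    have h2 := suppR_nonneg hxsupp i
    have he1 : ∑ j, v j * x j = ell v (NDiag f) := by linarith
    have he2 : x i = 0 := by linarith
    exact ⟨⟨hxsupp, he1⟩, he2⟩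
  · rintro ⟨⟨hxsupp, hxe⟩, hxi⟩
    refine ⟨hxsupp, ?_⟩
    rw [hell, dot_add_ind, hxi, add_zero]
    exact hxe

lemma vtx_subset_minS {f} {w : Fin 3 → ℝ} {S : Set (Fin 3 → ℝ)} (hw : ∀ i, 0 < w i)
    (hne : (NSupp f).Nonempty) (hSface : S = faceOf w (NDiag f)) :
    vtxOf f S ⊆ MinS f w := by
  rintro x ⟨⟨v, hv, hxf⟩, hxS⟩
  have hsub : MinS f v ⊆ {x} := by
    intro y hy
    have : y ∈ faceOf v (NDiag f) := by
      rw [face_eq_hull hv hne]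
      exact subset_convexHull ℝ _ hy
    rw [← hxf] at this
    exact this
  obtain ⟨x₀, hx₀supp, -, hx₀ell⟩ := exists_min hv hne
  have hx₀M : x₀ ∈ MinS f v := ⟨hx₀supp, hx₀ell.symm⟩
  have hx₀x : x₀ = x := hsub hx₀M
  have hxsupp : x ∈ SuppR f := hx₀x ▸ hx₀supp
  rw [hSface] at hxS
  exact ⟨hxsupp, hxS.2⟩

lemma convex_plane_dot (j : Fin 3) (w : Fin 3 → ℝ) (c : ℝ) :
    Convex ℝ {x : Fin 3 → ℝ | x j = 0 ∧ ∑ l, w l * x l = c} := by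
  intro a ha b hb s t hs ht hst
  obtain ⟨ha1, ha2⟩ := ha
  obtain ⟨hb1, hb2⟩ := hb
  constructor
  · show s * a j + t * b j = 0
    rw [ha1, hb1]; ring
  · show ∑ l, w l * (s • a + t • b) l = c
    have he : ∑ l, w l * (s • a + t • b) l = s * (∑ l, w l * a l) + t * (∑ l, w l * b l) := by
      rw [Finset.mul_sum, Finset.mul_sum, ← Finset.sum_add_distrib]
      exact Finset.sum_congr rfl fun l _ => by simp [Pi.add_apply]; ring
    rw [he, ha2, hb2, ← add_mul, hst, one_mul]

lemma convex_plane (j : Fin 3) : Convex ℝ {x : Fin 3 → ℝ | x j = 0} := by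
  intro a ha b hb s t hs ht hst
  show s * a j + t * b j = 0
  rw [Set.mem_setOf_eq] at ha hb
  rw [ha, hb]; ring

/-! ### every 2-face all of whose non-apex minimizers lie in one coordinate plane is exceptional -/

lemma exc_of_plane {f} {u w : Fin 3 → ℝ} (hu : ∀ i, 0 < u i) (hw : ∀ i, 0 < w i)
    {i₀ i₁ i₂ : Fin 3} (h01 : i₀ ≠ i₁) (h02 : i₀ ≠ i₂) (h12 : i₁ ≠ i₂) {k : ℕ} (hk : 2 ≤ k)
    (hne : (NSupp f).Nonempty)
    (hA : ptA i₀ ∈ SuppR f)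
    (hellA : ell u (NDiag f) = ∑ i, u i * ptA i₀ i)
    (hstrict : ∀ x ∈ SuppR f, x ≠ ptA i₀ → x ≠ ptB i₀ k → ell u (NDiag f) < ∑ i, u i * x i)
    {S : Set (Fin 3 → ℝ)} (hSface : S = faceOf w (NDiag f)) (hdim : faceDim S = 2)
    (hplane : ∀ x ∈ MinS f w, x ≠ ptA i₀ → x i₁ = 0)
    (hdist : distAxis i₂ (ptA i₀) = 1) : S ∈ Ef f := by
  have hShull : S = convexHull ℝ (MinS f w) := by rw [hSface, face_eq_hull hw hne]
  have hAi₁ : ptA i₀ i₁ = 1 := ptA_ne h01.symm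
  -- the apex belongs to the minimizing set
  have hAM : ptA i₀ ∈ MinS f w := by
    by_contra h
    have hMp : ∀ x ∈ MinS f w, x i₁ = 0 ∧ ∑ l, w l * x l = ell w (NDiag f) := by
      intro x hx
      refine ⟨hplane x hx (fun he => h (he ▸ hx)), hx.2⟩
    have hsub : S ⊆ {x : Fin 3 → ℝ | x i₁ = 0 ∧ ∑ l, w l * x l = ell w (NDiag f)} := by
      rw [hShull]
      exact convexHull_min hMp (convex_plane_dot i₁ w _)
    have : faceDim S ≤ 1 :=
      dim_le_one_plane h01 (hw i₀).ne' (fun x hx => hsub hx)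
    omega
  set V : Set (Fin 3 → ℝ) := MinS f w \ {ptA i₀} with hV
  have hVplane : ∀ x ∈ V, x i₁ = 0 := fun x hx => hplane x hx.1 hx.2
  -- V contains two distinct points
  have hPQ : ∃ P ∈ V, ∃ Q ∈ V, P ≠ Q := by
    by_contra h
    push_neg at h
    have hMsub : ∃ v0, MinS f w ⊆ {ptA i₀, v0} := by
      rcases Set.eq_empty_or_nonempty V with hVe | ⟨v0, hv0⟩
      · refine ⟨ptA i₀, fun x hx => ?_⟩
        rcases eq_or_ne x (ptA i₀) with h' | h'
        · simp [h']
        · exfalso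
          have hxV : x ∈ V := ⟨hx, h'⟩
          rw [hVe] at hxV
          exact Set.notMem_empty x hxV
      · refine ⟨v0, fun x hx => ?_⟩
        rcases eq_or_ne x (ptA i₀) with h' | h'
        · simp [h']
        · have : x ∈ V := ⟨hx, h'⟩
          simp [h x this v0 hv0]
    obtain ⟨v0, hv0⟩ := hMsub
    have : S ⊆ convexHull ℝ {ptA i₀, v0} := by
      rw [hShull]
      exact convexHull_mono hv0
    have := dim_le_one_pair this
    have : faceDim S ≤ 1 := this
    omega
  obtain ⟨P, hP, Q, hQ, hPQne⟩ := hPQ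
  -- the opposite edge T
  set T : Set (Fin 3 → ℝ) := convexHull ℝ V with hT
  have hpert := pert_face hw hne i₁ ⟨P, hP.1, hVplane P hP⟩
  have hMw' : MinS f (fun j => w j + indC i₁ j) = V := by
    rw [hpert.2]
    ext x
    constructor
    · rintro ⟨hxM, hxi⟩
      refine ⟨hxM, ?_⟩
      intro he
      rw [he, hAi₁] at hxi
      norm_num at hxi
    · intro hx
      exact ⟨hx.1, hVplane x hx⟩
  have hw' : ∀ j, 0 < w j + indC i₁ j := by
    intro j
    by_cases h : j = i₁
    · subst h; simp [indC]; linarith [hw j]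
    · simp [indC, h]; exact hw j
  have hTface : faceOf (fun j => w j + indC i₁ j) (NDiag f) = T := by
    rw [face_eq_hull hw' hne, hMw']
  -- T has dimension 1
  have hTsub : T ⊆ {x : Fin 3 → ℝ | x i₁ = 0 ∧ ∑ l, w l * x l = ell w (NDiag f)} :=
    convexHull_min (fun x hx => ⟨hVplane x hx, hx.1.2⟩) (convex_plane_dot i₁ w _)
  have hTdim : faceDim T = 1 := by
    have hle : faceDim T ≤ 1 :=
      dim_le_one_plane h01 (hw i₀).ne' (fun x hx => hTsub hx)
    have hge : 1 ≤ faceDim T :=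
      dim_ge_one (subset_convexHull ℝ _ hP) (subset_convexHull ℝ _ hQ) hPQne
    omega
  -- {ptA i₀} is a compact face
  have hMusub : MinS f u ⊆ {ptA i₀, ptB i₀ k} := by
    intro x hx
    by_contra h
    simp only [Set.mem_insert_iff, Set.mem_singleton_iff] at h
    push_neg at h
    have := hstrict x hx.1 h.1 h.2
    rw [hx.2] at this
    exact lt_irrefl _ this
  have hu' : ∀ j, 0 < u j + indC i₀ j := by
    intro j
    by_cases h : j = i₀
    · subst h; simp [indC]; linarith [hu j]
    · simp [indC, h]; exact hu j
  have hupert := pert_face hu hne i₀ ⟨ptA i₀, ⟨hA, hellA.symm⟩, ptA_self⟩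
  have hMu' : MinS f (fun j => u j + indC i₀ j) = {ptA i₀} := by
    rw [hupert.2]
    ext x
    constructor
    · rintro ⟨hxM, hxi⟩
      rcases hMusub hxM with h' | h'
      · exact h'
      · exfalso
        rw [h', ptB_self] at hxi
        have : (2 : ℝ) ≤ (k : ℝ) := by exact_mod_cast hk
        linarith
    · rintro rfl
      exact ⟨⟨hA, hellA.symm⟩, ptA_self⟩
  have hAface : IsCompactFace f {ptA i₀} := by
    refine ⟨fun j => u j + indC i₀ j, hu', ?_⟩
    rw [face_eq_hull hu' hne, hMu', convexHull_singleton]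
  have hAS : ptA i₀ ∈ S := by
    rw [hShull]
    exact subset_convexHull ℝ _ hAM
  -- vertex sets
  have hvtxT : vtxOf f T = vtxOf f S \ {ptA i₀} := by
    ext x
    constructor
    · rintro ⟨hxcf, hxT⟩
      have hxV : x ∈ V := by
        rw [← hMw']
        exact vtx_subset_minS hw' hne hTface.symm ⟨hxcf, hxT⟩
      refine ⟨⟨hxcf, ?_⟩, hxV.2⟩
      rw [hShull]
      exact subset_convexHull ℝ _ hxV.1
    · rintro ⟨⟨hxcf, hxS⟩, hxA⟩
      have hxM : x ∈ MinS f w := vtx_subset_minS hw hne hSface ⟨hxcf, hxS⟩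
      exact ⟨hxcf, subset_convexHull ℝ _ (⟨hxM, hxA⟩ : x ∈ V)⟩
  refine ⟨⟨⟨w, hw, hSface⟩, hdim⟩, i₂, ptA i₀, ⟨hAface, hAS⟩, hdist, T,
    ⟨⟨fun j => w j + indC i₁ j, hw', hTface.symm⟩, hTdim⟩, ⟨i₁, h12, ?_⟩, hvtxT⟩
  exact convexHull_min (fun x hx => hVplane x hx) (convex_plane i₁)

/-! ### every 2-face is exceptional -/

set_option maxHeartbeats 1000000 in
lemma two_face_exc {f} {u w : Fin 3 → ℝ} (hu : ∀ i, 0 < u i) (hw : ∀ i, 0 < w i)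
    {i₀ i₁ i₂ : Fin 3} (h01 : i₀ ≠ i₁) (h02 : i₀ ≠ i₂) (h12 : i₁ ≠ i₂) {k : ℕ} (hk : 2 ≤ k)
    (hne : (NSupp f).Nonempty)
    (hA : ptA i₀ ∈ SuppR f) (hB : ptB i₀ k ∈ SuppR f)
    (hellA : ell u (NDiag f) = ∑ i, u i * ptA i₀ i)
    (hellB : ∑ i, u i * ptB i₀ k i = ell u (NDiag f))
    (hstrict : ∀ x ∈ SuppR f, x ≠ ptA i₀ → x ≠ ptB i₀ k → ell u (NDiag f) < ∑ i, u i * x i)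
    {S : Set (Fin 3 → ℝ)} (hSface : S = faceOf w (NDiag f)) (hdim : faceDim S = 2)
    (hd1 : distAxis i₂ (ptA i₀) = 1) (hd2 : distAxis i₁ (ptA i₀) = 1) : S ∈ Ef f := by
  have hA0 : ptA i₀ i₀ = 0 := ptA_self
  have hA1 : ptA i₀ i₁ = 1 := ptA_ne h01.symm
  have hA2 : ptA i₀ i₂ = 1 := ptA_ne h02.symm
  have hkR : (2 : ℝ) ≤ (k : ℝ) := by exact_mod_cast hk
  -- basic ell facts for u
  have hellA' : ell u (NDiag f) = u i₁ + u i₂ := by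
    rw [hellA, dot_ptA, sum3 h01 h02 h12]
    ring
  have hellB' : (k : ℝ) * u i₀ = ell u (NDiag f) := by rw [← hellB, dot_ptB]
  -- basic ell facts for w
  have hwB : ell w (NDiag f) ≤ (k : ℝ) * w i₀ := by
    have := ell_le_suppR hw hne hB
    rwa [dot_ptB] at this
  have hwA : ell w (NDiag f) ≤ w i₁ + w i₂ := by
    have := ell_le_suppR hw hne hA
    rw [dot_ptA, sum3 h01 h02 h12 w] at this
    linarith
  -- domination: every minimizer other than the apex misses a coordinate
  have hdom : ∀ x ∈ MinS f w, x ≠ ptA i₀ → x i₁ = 0 ∨ x i₂ = 0 := by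
    intro x hx hxA
    by_contra h
    push_neg at h
    obtain ⟨h1, h2⟩ := h
    have hx1 : 1 ≤ x i₁ := (suppR_coord hx.1 i₁).resolve_left h1
    have hx2 : 1 ≤ x i₂ := (suppR_coord hx.1 i₂).resolve_left h2
    have hx0 : 0 ≤ x i₀ := suppR_nonneg hx.1 i₀
    have hdotx : w i₀ * x i₀ + w i₁ * x i₁ + w i₂ * x i₂ = ell w (NDiag f) := by
      have := hx.2
      rwa [sum3 h01 h02 h12 (fun j => w j * x j)] at this
    have e0 : x i₀ = 0 := by nlinarith [hw i₀, hw i₁, hw i₂]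
    have e1 : x i₁ = 1 := by nlinarith [hw i₀, hw i₁, hw i₂]
    have e2 : x i₂ = 1 := by nlinarith [hw i₀, hw i₁, hw i₂]
    exact hxA (eq3 h01 h02 h12 (by rw [e0, hA0]) (by rw [e1, hA1]) (by rw [e2, hA2]))
  -- dichotomy
  have hdich : (∀ x ∈ MinS f w, x ≠ ptA i₀ → x i₁ = 0) ∨
      (∀ x ∈ MinS f w, x ≠ ptA i₀ → x i₂ = 0) := by
    by_contra h
    push_neg at h
    obtain ⟨⟨P, hPM, hPA, hP1⟩, ⟨Q, hQM, hQA, hQ2⟩⟩ := h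
    have hP1' : 1 ≤ P i₁ := (suppR_coord hPM.1 i₁).resolve_left hP1
    have hP2 : P i₂ = 0 := (hdom P hPM hPA).resolve_left hP1
    have hQ2' : 1 ≤ Q i₂ := (suppR_coord hQM.1 i₂).resolve_left hQ2
    have hQ1 : Q i₁ = 0 := (hdom Q hQM hQA).resolve_right hQ2
    have hPB : P ≠ ptB i₀ k := by
      intro he
      rw [he, ptB_ne h01.symm] at hP1'
      linarith
    have hQB : Q ≠ ptB i₀ k := by
      intro he
      rw [he, ptB_ne h02.symm] at hQ2'
      linarith
    have hPu := hstrict P hPM.1 hPA hPB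
    have hQu := hstrict Q hQM.1 hQA hQB
    rw [sum3 h01 h02 h12 (fun j => u j * P j)] at hPu
    rw [sum3 h01 h02 h12 (fun j => u j * Q j)] at hQu
    have hPw : w i₀ * P i₀ + w i₁ * P i₁ + w i₂ * P i₂ = ell w (NDiag f) := by
      have := hPM.2
      rwa [sum3 h01 h02 h12 (fun j => w j * P j)] at this
    have hQw : w i₀ * Q i₀ + w i₁ * Q i₁ + w i₂ * Q i₂ = ell w (NDiag f) := by
      have := hQM.2
      rwa [sum3 h01 h02 h12 (fun j => w j * Q j)] at this
    have m1 : u i₁ + u i₂ = (k : ℝ) * u i₀ := by linarith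
    have m2 : (k : ℝ) * u i₀ < Q i₀ * u i₀ + Q i₂ * u i₂ := by
      have hz : u i₁ * Q i₁ = 0 := mul_eq_zero_of_right _ hQ1
      nlinarith [hQu, hellB', hz]
    have m3 : (k : ℝ) * u i₀ < P i₀ * u i₀ + P i₁ * u i₁ := by
      have hz : u i₂ * P i₂ = 0 := mul_eq_zero_of_right _ hP2
      nlinarith [hPu, hellB', hz]
    have m4 : Q i₀ * w i₀ + Q i₂ * w i₂ = ell w (NDiag f) := by
      linear_combination hQw - w i₁ * hQ1
    have m5 : P i₀ * w i₀ + P i₁ * w i₁ = ell w (NDiag f) := by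
      linear_combination hPw - w i₂ * hP2
    exact master (hu i₀) (hw i₀) (hw i₁) (hw i₂) hQ2' hP1'
      (suppR_nonneg hQM.1 i₀) (suppR_nonneg hPM.1 i₀) m1 m2 m3 m4 m5 hwA hwB
  rcases hdich with hpl | hpl
  · exact exc_of_plane hu hw h01 h02 h12 hk hne hA hellA hstrict hSface hdim hpl hd1
  · exact exc_of_plane hu hw h02 h01 h12.symm hk hne hA hellA hstrict hSface hdim hpl hd2

/-! ### assembly -/

lemma distAxis_ptA {i i₀ : Fin 3} (h : i ≠ i₀) : distAxis i (ptA i₀) = 1 := by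
  have hsum : ∑ j, (ptA i₀ j) ^ 2 = 2 := by
    fin_cases i₀ <;> simp [ptA, Fin.sum_univ_three] <;> norm_num
  have he : ∑ j ∈ Finset.univ.erase i, (ptA i₀ j) ^ 2 = 2 - (ptA i₀ i) ^ 2 := by
    rw [Finset.sum_erase_eq_sub (Finset.mem_univ i), hsum]
  rw [distAxis, he, ptA_ne h]
  norm_num

lemma vecA0 : (![0, 1, 1] : Fin 3 → ℝ) = ptA 0 := by
  funext j; fin_cases j <;> simp [ptA]
lemma vecA1 : (![1, 0, 1] : Fin 3 → ℝ) = ptA 1 := by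
  funext j; fin_cases j <;> simp [ptA]
lemma vecA2 : (![1, 1, 0] : Fin 3 → ℝ) = ptA 2 := by
  funext j; fin_cases j <;> simp [ptA]
lemma vecB0 (m : ℕ) : (![(m : ℝ), 0, 0] : Fin 3 → ℝ) = ptB 0 m := by
  funext j; fin_cases j <;> simp [ptB]
lemma vecB1 (m : ℕ) : (![0, (m : ℝ), 0] : Fin 3 → ℝ) = ptB 1 m := by
  funext j; fin_cases j <;> simp [ptB]
lemma vecB2 (m : ℕ) : (![0, 0, (m : ℝ)] : Fin 3 → ℝ) = ptB 2 m := by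
  funext j; fin_cases j <;> simp [ptB]

lemma extract {f} {I : Set (Fin 3 → ℝ)} (hIJ : InJ I) (hI1 : I ∈ GammaK f 1) :
    ∃ (i₀ i₁ i₂ : Fin 3) (k : ℕ) (u : Fin 3 → ℝ), i₀ ≠ i₁ ∧ i₀ ≠ i₂ ∧ i₁ ≠ i₂ ∧ 2 ≤ k ∧
      (∀ i, 0 < u i) ∧ I = segment ℝ (ptA i₀) (ptB i₀ k) ∧
      segment ℝ (ptA i₀) (ptB i₀ k) = faceOf u (NDiag f) := by
  obtain ⟨m, hm, hseg⟩ := hIJ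
  obtain ⟨u, hu, hface⟩ := hI1.1
  rcases hseg with h | h | h
  · rw [vecA0, vecB0] at h
    exact ⟨0, 1, 2, m, u, by decide, by decide, by decide, hm, hu, h, h ▸ hface⟩
  · rw [vecA1, vecB1] at h
    exact ⟨1, 0, 2, m, u, by decide, by decide, by decide, hm, hu, h, h ▸ hface⟩
  · rw [vecA2, vecB2] at h
    exact ⟨2, 0, 1, m, u, by decide, by decide, by decide, hm, hu, h, h ▸ hface⟩

lemma cross_lt {f} {u : Fin 3 → ℝ} {i₀ j₀ : Fin 3} {k m : ℕ} (hu : ∀ i, 0 < u i)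
    (hk : 2 ≤ k) (hm : 2 ≤ m) (hne : i₀ ≠ j₀)
    (hellA : ell u (NDiag f) = ∑ i, u i * ptA i₀ i)
    (hellB : ∑ i, u i * ptB i₀ k i = ell u (NDiag f))
    (hstrict : ∀ x ∈ SuppR f, x ≠ ptA i₀ → x ≠ ptB i₀ k → ell u (NDiag f) < ∑ i, u i * x i)
    (hA' : ptA j₀ ∈ SuppR f) (hB' : ptB j₀ m ∈ SuppR f) : (k : ℝ) < (m : ℝ) := by
  have hkR : (2 : ℝ) ≤ (k : ℝ) := by exact_mod_cast hk
  have hmR : (2 : ℝ) ≤ (m : ℝ) := by exact_mod_cast hm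
  have hAA : ptA j₀ ≠ ptA i₀ := by
    intro he
    have := congrFun he j₀
    rw [ptA_self, ptA_ne hne.symm] at this
    norm_num at this
  have hAB : ptA j₀ ≠ ptB i₀ k := by
    intro he
    have := congrFun he i₀
    rw [ptA_ne hne, ptB_self] at this
    linarith
  have hBA : ptB j₀ m ≠ ptA i₀ := by
    intro he
    have := congrFun he j₀
    rw [ptB_self, ptA_ne hne.symm] at this
    linarith
  have hBB : ptB j₀ m ≠ ptB i₀ k := by
    intro he
    have := congrFun he i₀
    rw [ptB_ne hne, ptB_self] at this
    linarith
  rw [dot_ptB] at hellB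
  have h1 := hstrict _ hA' hAA hAB
  have h2 := hstrict _ hB' hBA hBB
  rw [dot_ptA] at h1
  rw [dot_ptB] at h2
  rw [hellA, dot_ptA] at h1 h2
  -- h1 : ∑ u - u i₀ < ∑ u - u j₀  →  u j₀ < u i₀
  have hu0 : u j₀ < u i₀ := by linarith
  -- h2 : ∑ u - u i₀ < m * u j₀, and k * u i₀ = ∑ u - u i₀
  have hBe : (k : ℝ) * u i₀ = (∑ j, u j) - u i₀ := by
    rw [hellB, hellA, dot_ptA]
  have hj : 0 < u j₀ := hu j₀
  nlinarith [hu i₀]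

theorem part1 {f} {I I' : Set (Fin 3 → ℝ)} (hJ : InJ I) (h1 : I ∈ GammaK f 1)
    (hJ' : InJ I') (h1' : I' ∈ GammaK f 1) : I = I' := by
  obtain ⟨i₀, i₁, i₂, k, u, h01, h02, h12, hk, hu, hIeq, hface⟩ := extract hJ h1
  obtain ⟨j₀, j₁, j₂, m, v, g01, g02, g12, hm, hv, hIeq', hface'⟩ := extract hJ' h1'
  obtain ⟨hne, hA, hB, hellA, hellB, hstrict⟩ := seg_face_props hu h01 h02 h12 hk hface
  obtain ⟨hne', hA', hB', hellA', hellB', hstrict'⟩ := seg_face_props hv g01 g02 g12 hm hface'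
  by_cases hax : i₀ = j₀
  · subst hax
    by_cases hkm : k = m
    · rw [hIeq, hIeq', hkm]
    · exfalso
      have hBB' : ptB i₀ m ≠ ptB i₀ k := by
        intro he
        have := congrFun he i₀
        rw [ptB_self, ptB_self] at this
        exact hkm (by exact_mod_cast this.symm)
      have hBA : ptB i₀ m ≠ ptA i₀ := by
        intro he
        have := congrFun he i₀
        rw [ptB_self, ptA_self] at this
        have : (2:ℝ) ≤ 0 := le_trans (by exact_mod_cast hm) this.le
        linarith
      have hs := hstrict _ hB' hBA hBB'
      rw [dot_ptB] at hs
      have hBe : (k : ℝ) * u i₀ = ell u (NDiag f) := by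
        rw [← hellB, dot_ptB]
      -- symmetric direction
      have hAB' : ptB i₀ k ≠ ptB i₀ m := by
        intro he
        have := congrFun he i₀
        rw [ptB_self, ptB_self] at this
        exact hkm (by exact_mod_cast this)
      have hBA' : ptB i₀ k ≠ ptA i₀ := by
        intro he
        have := congrFun he i₀
        rw [ptB_self, ptA_self] at this
        have : (2:ℝ) ≤ 0 := le_trans (by exact_mod_cast hk) this.le
        linarith
      have hs' := hstrict' _ hB hBA' hAB'
      rw [dot_ptB] at hs'
      have hBe' : (m : ℝ) * v i₀ = ell v (NDiag f) := by
        rw [← hellB', dot_ptB]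
      have hui := hu i₀
      have hvi := hv i₀
      nlinarith
  · exfalso
    have hlt1 := cross_lt hu hk hm hax hellA hellB hstrict hA' hB'
    have hlt2 := cross_lt hv hm hk (Ne.symm hax) hellA' hellB' hstrict' hA hB
    linarith

/-- `𝒥 ∩ Γ¹(f)` has at most one element, and if it is nonempty then either
`Γ²(f) = ∅` or `Γ²(f) = E_f ≠ ∅`. -/
theorem stmt13 (f : (Fin 3 → ℂ) → ℂ) (hf : AnalyticAt ℂ f 0) :
    {I | InJ I ∧ I ∈ GammaK f 1}.Subsingleton ∧
    ((∃ I, InJ I ∧ I ∈ GammaK f 1) →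
      GammaK f 2 = ∅ ∨ (GammaK f 2 = Ef f ∧ (GammaK f 2).Nonempty)) := by
  constructor
  · rintro I ⟨hJ, h1⟩ I' ⟨hJ', h1'⟩
    exact part1 hJ h1 hJ' h1'
  · rintro ⟨I, hJ, h1⟩
    rcases Classical.em (GammaK f 2 = ∅) with he | he
    · exact Or.inl he
    · refine Or.inr ⟨?_, Set.nonempty_iff_ne_empty.2 he⟩
      obtain ⟨i₀, i₁, i₂, k, u, h01, h02, h12, hk, hu, hIeq, hface⟩ := extract hJ h1
      obtain ⟨hne, hA, hB, hellA, hellB, hstrict⟩ := seg_face_props hu h01 h02 h12 hk hface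
      apply Set.Subset.antisymm
      · rintro S ⟨⟨w, hw, hSface⟩, hdim⟩
        exact two_face_exc hu hw h01 h02 h12 hk hne hA hB hellA hellB hstrict hSface hdim
          (distAxis_ptA h02.symm) (distAxis_ptA h01.symm)
      · rintro S hS
        exact hS.1
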